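/- With the edge lengths d(u) = 2^{−p₀(u)}, the prepending maps S₀(w) = aw and T₀(w) = bw are 1-Lipschitz for the tree metric ρ on Γ₀: for all finite words u,v over {a,b}, ρ(au, av) ≤ ρ(u,v) and ρ(bu, bv) ≤ ρ(u,v). -/

import Mathlib

/-- The prefix of length `n` of the infinite word `z : ℕ → Bool`
(letters `a`/`b` are modeled as the two elements of `Bool`). -/
def prefixWord (z : ℕ → Bool) (n : ℕ) : List Bool := (List.range n).map z

/-- `z` is periodic with period `p ≥ 1`: `z (i + p) = z i` for all `i`. -/
def IsPeriodicWith (z : ℕ → Bool) (p : ℕ) : Prop := 1 ≤ p ∧ ∀ i, z (i + p) = z i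

/-- `z` is a periodic infinite word. -/
def IsPeriodicWord (z : ℕ → Bool) : Prop := ∃ p, IsPeriodicWith z p

/-- The minimal period of `z` (junk value `0` if `z` is not periodic). -/
noncomputable def minPeriod (z : ℕ → Bool) : ℕ := sInf {p | IsPeriodicWith z p}

/-- The finite word `v` occurs in `z` as a contiguous segment starting at position `n`. -/
def OccursAt (v : List Bool) (z : ℕ → Bool) (n : ℕ) : Prop :=
  ∀ i < v.length, z (n + i) = v.getD i false

/-- The finite word `v` occurs somewhere in `z` as a contiguous segment. -/
def Occurs (v : List Bool) (z : ℕ → Bool) : Prop := ∃ n, OccursAt v z n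

/-- The minimal potential period `p₀ v` of a finite word `v`: the minimum, over all
periodic infinite words `z` in which `v` occurs, of the minimal period of `z`;
`p₀` of the empty word is `0`. -/
noncomputable def p0 (v : List Bool) : ℕ :=
  if v = [] then 0
  else sInf {p | ∃ z : ℕ → Bool, IsPeriodicWord z ∧ Occurs v z ∧ minPeriod z = p}

/-- The `d`-length of a finite word: the sum of the lengths `d (w|_i)` of the tree
edges along the path from the empty word to `w` (the edge joining a nonempty word `u`
to the word obtained by deleting its last letter has length `d u`). -/
noncomputable def dLength (d : List Bool → ℝ) (w : List Bool) : ℝ :=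
  ∑ i ∈ Finset.range w.length, d (w.take (i + 1))

/-- The longest common prefix of two finite words. -/
def lcp : List Bool → List Bool → List Bool
  | a :: u, b :: v => if a = b then a :: lcp u v else []
  | _, _ => []

/-- The tree metric on finite words induced by the edge lengths `d`:
`ρ(u,v) = l_d(u) + l_d(v) − 2 l_d(u ∧ v)`. -/
noncomputable def treeDist (d : List Bool → ℝ) (u v : List Bool) : ℝ :=
  dLength d u + dLength d v - 2 * dLength d (lcp u v)

/-- The specific edge lengths `d(u) = 2 ^ (−p₀ u)` used in the counterexample. -/
noncomputable def dEdge (u : List Bool) : ℝ := 2 ^ (-(p0 u : ℤ))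

/-- Prepending a finite word `w` to an infinite word `z`. -/
def prependWord (w : List Bool) (z : ℕ → Bool) : ℕ → Bool :=
  fun i => if i < w.length then w.getD i false else z (i - w.length)

/- auxiliary lemmas -/

theorem lcp_prefix_left : ∀ u v : List Bool, lcp u v <+: u
  | [], _ => by simp [lcp]
  | _ :: _, [] => by simp [lcp]
  | a :: u, b :: v => by
    by_cases h : a = b
    · simp only [lcp, if_pos h]
      exact List.cons_prefix_cons.mpr ⟨rfl, lcp_prefix_left u v⟩
    · simp [lcp, h]

theorem lcp_prefix_right : ∀ u v : List Bool, lcp u v <+: v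
  | [], _ => by simp [lcp]
  | _ :: _, [] => by simp [lcp]
  | a :: u, b :: v => by
    by_cases h : a = b
    · subst h
      simp only [lcp, if_pos rfl]
      exact List.cons_prefix_cons.mpr ⟨rfl, lcp_prefix_right u v⟩
    · simp [lcp, h]

theorem lcp_cons (c : Bool) (u v : List Bool) : lcp (c :: u) (c :: v) = c :: lcp u v := by
  simp [lcp]

theorem dLength_split (d : List Bool → ℝ) {m w : List Bool} (h : m <+: w) :
    dLength d w = dLength d m +
      ∑ i ∈ Finset.Ico m.length w.length, d (w.take (i + 1)) := by
  have hl : m.length ≤ w.length := h.length_le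
  have h1 : dLength d m = ∑ i ∈ Finset.range m.length, d (w.take (i + 1)) := by
    apply Finset.sum_congr rfl
    intro i hi
    simp only [Finset.mem_range] at hi
    have := (h.take (i + 1)).eq_of_length (by simp; omega)
    rw [this]
  rw [dLength, h1, Finset.range_eq_Ico]
  rw [Finset.range_eq_Ico]
  exact (Finset.sum_Ico_consecutive (fun i => d (w.take (i + 1))) (Nat.zero_le _) hl).symm

theorem treeDist_eq (d : List Bool → ℝ) (u v : List Bool) :
    treeDist d u v =
      (∑ i ∈ Finset.Ico (lcp u v).length u.length, d (u.take (i + 1))) +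
      ∑ i ∈ Finset.Ico (lcp u v).length v.length, d (v.take (i + 1)) := by
  rw [treeDist, dLength_split d (lcp_prefix_left u v), dLength_split d (lcp_prefix_right u v)]
  ring

theorem occurs_tail {c : Bool} {w : List Bool} {z : ℕ → Bool} (h : Occurs (c :: w) z) :
    Occurs w z := by
  obtain ⟨n, hn⟩ := h
  refine ⟨n + 1, fun i hi => ?_⟩
  have := hn (i + 1) (by simp; omega)
  simpa [Nat.add_assoc, Nat.add_comm 1 i] using this

theorem p0_le_p0_cons (c : Bool) (w : List Bool) : p0 w ≤ p0 (c :: w) := by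
  rcases eq_or_ne w [] with rfl | hw
  · simp [p0]
  · rw [p0, if_neg hw, p0, if_neg (by simp)]
    set S := {p | ∃ z : ℕ → Bool, IsPeriodicWord z ∧ Occurs (c :: w) z ∧ minPeriod z = p}
    have hS : S.Nonempty := by
      set l := c :: w with hl
      set z : ℕ → Bool := fun i => l.getD (i % l.length) false with hz
      have hlen : 1 ≤ l.length := by simp [hl]
      have hper : IsPeriodicWith z l.length := by
        refine ⟨hlen, fun i => ?_⟩
        simp [hz, Nat.add_mod_right]
      have hocc : Occurs l z := by
        refine ⟨0, fun i hi => ?_⟩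
        simp [hz, Nat.mod_eq_of_lt hi]
      exact ⟨minPeriod z, z, ⟨l.length, hper⟩, hocc, rfl⟩
    have hmem : sInf S ∈ S := Nat.sInf_mem hS
    obtain ⟨z, hz1, hz2, hz3⟩ := hmem
    exact Nat.sInf_le ⟨z, hz1, occurs_tail hz2, hz3⟩

theorem dEdge_cons_le (c : Bool) (w : List Bool) : dEdge (c :: w) ≤ dEdge w := by
  unfold dEdge
  apply zpow_le_zpow_right₀ (by norm_num : (1:ℝ) ≤ 2)
  have := p0_le_p0_cons c w
  omega


/-- With the edge lengths `d(u) = 2 ^ (−p₀ u)`, the prepending maps `w ↦ a·w` and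
`w ↦ b·w` are 1-Lipschitz for the tree metric: for every letter `c` and all finite
words `u, v`, `ρ(c·u, c·v) ≤ ρ(u, v)`. -/
theorem prepend_lipschitz_one (c : Bool) (u v : List Bool) :
    treeDist dEdge (c :: u) (c :: v) ≤ treeDist dEdge u v := by
  rw [treeDist_eq, treeDist_eq, lcp_cons]
  have key : ∀ w : List Bool,
      (∑ i ∈ Finset.Ico (c :: lcp u v).length (c :: w).length, dEdge ((c :: w).take (i + 1)))
      ≤ ∑ i ∈ Finset.Ico (lcp u v).length w.length, dEdge (w.take (i + 1)) := by
    intro w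
    have hre : ∑ i ∈ Finset.Ico (c :: lcp u v).length (c :: w).length,
        dEdge ((c :: w).take (i + 1))
        = ∑ i ∈ Finset.Ico (lcp u v).length w.length, dEdge (c :: w.take (i + 1)) := by
      simp only [List.length_cons]
      rw [Finset.sum_Ico_eq_sum_range, Finset.sum_Ico_eq_sum_range]
      apply Finset.sum_congr (by congr 1; omega)
      intro i _
      congr 1
      rw [show (lcp u v).length + 1 + i + 1 = ((lcp u v).length + i + 1) + 1 by ring,
        List.take_succ_cons]
    rw [hre]
    exact Finset.sum_le_sum fun i _ => dEdge_cons_le c _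
  exact add_le_add (key u) (key v)
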